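/- Let P_n be the set of real symmetric positive semidefinite n×n matrices all of whose diagonal entries equal 1. For A ∈ P_n let √A denote the unique symmetric positive semidefinite square root of A, and define W(A) = ∫_{ℝⁿ} e^{−|x|²} · 1_{ℝⁿ_{≥0}}(√A · x) dx, where 1_{ℝⁿ_{≥0}} is the characteristic function of the closed nonnegative orthant. Then W is continuous on P_n: for any sequence A_m ∈ P_n with A_m → A ∈ P_n, one has W(A_m) → W(A). -/

import Mathlib

open Matrix MeasureTheory Classical

/-- The unique symmetric positive semidefinite square root of a positive semidefinite
real matrix (junk value `0` if the matrix is not positive semidefinite). -/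
noncomputable def msqrt (n : ℕ) (A : Matrix (Fin n) (Fin n) ℝ) : Matrix (Fin n) (Fin n) ℝ :=
  if h : A.PosSemidef then
    (h.1.eigenvectorUnitary : Matrix (Fin n) (Fin n) ℝ) *
      diagonal (RCLike.ofReal ∘ Real.sqrt ∘ h.1.eigenvalues) *
      (star h.1.eigenvectorUnitary : Matrix (Fin n) (Fin n) ℝ)
  else 0

/-- `W(A) = ∫_{ℝⁿ} e^{-|x|²} · 1_{ℝⁿ_{≥0}}(√A · x) dx`. -/
noncomputable def Wfun (n : ℕ) (A : Matrix (Fin n) (Fin n) ℝ) : ℝ :=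
  ∫ x : Fin n → ℝ,
    Real.exp (-(x ⬝ᵥ x)) *
      Set.indicator {y : Fin n → ℝ | ∀ i, 0 ≤ y i} (fun _ => (1 : ℝ)) ((msqrt n A) *ᵥ x)

noncomputable def Matrix.PosSemidef.sqrt {n : ℕ} {M : Matrix (Fin n) (Fin n) ℝ} (h : M.PosSemidef) :
    Matrix (Fin n) (Fin n) ℝ :=
  (h.1.eigenvectorUnitary : Matrix (Fin n) (Fin n) ℝ) *
    diagonal (RCLike.ofReal ∘ Real.sqrt ∘ h.1.eigenvalues) *
    (star h.1.eigenvectorUnitary : Matrix (Fin n) (Fin n) ℝ)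

open scoped MatrixOrder in
lemma Matrix.PosSemidef.sqrt_eq_cfcSqrt {n : ℕ} {M : Matrix (Fin n) (Fin n) ℝ}
    (h : M.PosSemidef) : h.sqrt = CFC.sqrt M := by
  rw [CFC.sqrt_eq_cfc, cfc_nnreal_eq_real _ M, h.1.cfc_eq]
  simp only [Matrix.IsHermitian.cfc, Matrix.PosSemidef.sqrt, Unitary.conjStarAlgAut_apply,
    Real.coe_sqrt, Real.coe_toNNReal']
  congr 3
  funext i
  simp [max_eq_left (h.eigenvalues_nonneg i)]

open scoped MatrixOrder in
lemma Matrix.PosSemidef.posSemidef_sqrt {n : ℕ} {M : Matrix (Fin n) (Fin n) ℝ}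
    (h : M.PosSemidef) : h.sqrt.PosSemidef := by
  rw [h.sqrt_eq_cfcSqrt]
  exact (CFC.sqrt_nonneg M).posSemidef

open scoped MatrixOrder in
lemma Matrix.PosSemidef.sqrt_mul_self {n : ℕ} {M : Matrix (Fin n) (Fin n) ℝ}
    (h : M.PosSemidef) : h.sqrt * h.sqrt = M := by
  rw [h.sqrt_eq_cfcSqrt]
  exact CFC.sqrt_mul_sqrt_self M h.nonneg

lemma Matrix.PosSemidef.sq_sqrt {n : ℕ} {M : Matrix (Fin n) (Fin n) ℝ}
    (h : M.PosSemidef) : h.sqrt ^ 2 = M := by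
  rw [sq, h.sqrt_mul_self]

open scoped MatrixOrder in
lemma Matrix.PosSemidef.eq_sqrt_of_sq_eq {n : ℕ} {A B : Matrix (Fin n) (Fin n) ℝ}
    (hB : B.PosSemidef) (hA : A.PosSemidef) (hsq : B ^ 2 = A) : B = hA.sqrt := by
  rw [hA.sqrt_eq_cfcSqrt, ← hsq]
  exact (CFC.sqrt_sq B hB.nonneg).symm


lemma row_sq_sum {n : ℕ} {M : Matrix (Fin n) (Fin n) ℝ} (h : M.PosSemidef) (i : Fin n) :
    ∑ j, (h.sqrt i j)^2 = M i i := by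
  have hs : h.sqrt * h.sqrt = M := h.sqrt_mul_self
  have hsym : (h.sqrt).IsHermitian := h.posSemidef_sqrt.1
  calc ∑ j, (h.sqrt i j)^2 = ∑ j, h.sqrt i j * h.sqrt j i := by
        refine Finset.sum_congr rfl fun j _ => ?_
        rw [sq]
        congr 1
        have := hsym.apply j i
        simpa using this
    _ = (h.sqrt * h.sqrt) i i := by rw [Matrix.mul_apply]
    _ = M i i := by rw [hs]

lemma entry_tendsto {n : ℕ} {B : ℕ → Matrix (Fin n) (Fin n) ℝ} {M : Matrix (Fin n) (Fin n) ℝ}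
    (h : Filter.Tendsto B Filter.atTop (nhds M)) (i j : Fin n) :
    Filter.Tendsto (fun m => B m i j) Filter.atTop (nhds (M i j)) := by
  have h' : Filter.Tendsto (fun m => B m i) Filter.atTop (nhds (M i)) :=
    tendsto_pi_nhds.1 h i
  exact tendsto_pi_nhds.1 h' j

lemma psd_limit {n : ℕ} {B : ℕ → Matrix (Fin n) (Fin n) ℝ} {M : Matrix (Fin n) (Fin n) ℝ}
    (hB : ∀ m, (B m).PosSemidef) (h : Filter.Tendsto B Filter.atTop (nhds M)) :
    M.PosSemidef := by
  rw [Matrix.posSemidef_iff_dotProduct_mulVec]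
  constructor
  · ext i j
    have h1 := entry_tendsto h i j
    have h2 : Filter.Tendsto (fun m => B m i j) Filter.atTop (nhds (M j i)) := by
      have := entry_tendsto h j i
      refine this.congr fun m => ?_
      have := (hB m).1.apply i j
      simpa using this
    have := tendsto_nhds_unique h1 h2
    simpa [Matrix.conjTranspose_apply] using this.symm
  · intro x
    have hc : Filter.Tendsto (fun m => star x ⬝ᵥ (B m *ᵥ x)) Filter.atTop
        (nhds (star x ⬝ᵥ (M *ᵥ x))) := by
      have hcont : Continuous fun C : Matrix (Fin n) (Fin n) ℝ => star x ⬝ᵥ (C *ᵥ x) :=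
        (continuous_const).dotProduct (continuous_id.matrix_mulVec continuous_const)
      exact (hcont.tendsto M).comp h
    exact le_of_tendsto_of_tendsto tendsto_const_nhds hc
      (Filter.Eventually.of_forall fun m => (hB m).dotProduct_mulVec_nonneg x)

lemma msqrt_tendsto {n : ℕ} {B : ℕ → Matrix (Fin n) (Fin n) ℝ} {M : Matrix (Fin n) (Fin n) ℝ}
    (hB : ∀ m, (B m).PosSemidef) (hBd : ∀ m i, B m i i = 1) (hM : M.PosSemidef)
    (h : Filter.Tendsto B Filter.atTop (nhds M)) :
    Filter.Tendsto (fun m => (hB m).sqrt) Filter.atTop (nhds hM.sqrt) := by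
  set T : ℕ → (Fin n → Fin n → ℝ) := fun m => (hB m).sqrt with hT
  have hball : ∀ m, T m ∈ Metric.closedBall (0 : Fin n → Fin n → ℝ) 1 := by
    intro m
    rw [Metric.mem_closedBall, dist_pi_le_iff zero_le_one]
    intro i
    rw [dist_pi_le_iff zero_le_one]
    intro j
    simp only [Real.dist_eq, Pi.zero_apply, sub_zero]
    have hsum := row_sq_sum (hB m) i
    rw [hBd m i] at hsum
    have hsq1 : ((hB m).sqrt i j)^2 ≤ 1 := by
      rw [← hsum]
      exact Finset.single_le_sum (f := fun k => ((hB m).sqrt i k)^2)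
        (fun k _ => sq_nonneg _) (Finset.mem_univ j)
    show |(hB m).sqrt i j| ≤ 1
    exact (sq_le_one_iff_abs_le_one (a := (hB m).sqrt i j)).1 hsq1
  apply Filter.tendsto_of_subseq_tendsto
  intro ns hns
  obtain ⟨S, _, φ, hφ, hS0⟩ := tendsto_subseq_of_bounded Metric.isBounded_closedBall
    (fun k => hball (ns k))
  refine ⟨φ, ?_⟩
  have hS : Filter.Tendsto (fun k => (hB (ns (φ k))).sqrt) Filter.atTop
      (nhds (Matrix.of S)) := hS0
  have hpsdS : (Matrix.of S).PosSemidef :=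
    psd_limit (fun k => (hB (ns (φ k))).posSemidef_sqrt) hS
  have hsq : (Matrix.of S) ^ 2 = M := by
    have h1 : Filter.Tendsto (fun k => (hB (ns (φ k))).sqrt ^ 2) Filter.atTop
        (nhds ((Matrix.of S) ^ 2)) := by
      simpa [pow_two] using hS.mul hS
    have h2 : Filter.Tendsto (fun k => (hB (ns (φ k))).sqrt ^ 2) Filter.atTop (nhds M) := by
      have : Filter.Tendsto (fun k => B (ns (φ k))) Filter.atTop (nhds M) :=
        h.comp (hns.comp hφ.tendsto_atTop)
      refine this.congr fun k => ?_
      rw [(hB (ns (φ k))).sq_sqrt]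
    exact tendsto_nhds_unique h1 h2
  have heq : Matrix.of S = hM.sqrt := hpsdS.eq_sqrt_of_sq_eq hM hsq
  rw [← heq]
  exact hS
lemma msqrt_eq {n : ℕ} {A : Matrix (Fin n) (Fin n) ℝ} (h : A.PosSemidef) :
    msqrt n A = h.sqrt := dif_pos h

lemma hyperplane_null {n : ℕ} (S : Matrix (Fin n) (Fin n) ℝ) (i : Fin n)
    (hrow : ∃ j, S i j ≠ 0) :
    volume {x : Fin n → ℝ | (S *ᵥ x) i = 0} = 0 := by
  obtain ⟨j, hj⟩ := hrow
  set f : (Fin n → ℝ) →ₗ[ℝ] ℝ := (LinearMap.proj i).comp S.mulVecLin with hf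
  have hset : {x : Fin n → ℝ | (S *ᵥ x) i = 0} = (LinearMap.ker f : Set (Fin n → ℝ)) := by
    ext x
    simp [hf, LinearMap.mem_ker, Matrix.mulVecLin_apply]
  rw [hset]
  apply MeasureTheory.Measure.addHaar_submodule
  intro htop
  apply hj
  have hx : Pi.single j (1:ℝ) ∈ LinearMap.ker f := htop ▸ Submodule.mem_top
  have : f (Pi.single j 1) = S i j := by
    simp [hf, Matrix.mulVecLin_apply, Matrix.mulVec_single]
  rw [LinearMap.mem_ker, this] at hx
  exact hx

/-- `W` is (sequentially) continuous on the set of symmetric positive semidefinite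
matrices with unit diagonal. -/
theorem stmt3 (n : ℕ) (A : ℕ → Matrix (Fin n) (Fin n) ℝ)
    (hA : ∀ m, (A m).IsSymm ∧ (∀ i, A m i i = 1) ∧ (A m).PosSemidef)
    (L : Matrix (Fin n) (Fin n) ℝ)
    (hL : L.IsSymm ∧ (∀ i, L i i = 1) ∧ L.PosSemidef)
    (hconv : Filter.Tendsto A Filter.atTop (nhds L)) :
    Filter.Tendsto (fun m => Wfun n (A m)) Filter.atTop (nhds (Wfun n L)) := by
  set Q : Set (Fin n → ℝ) := {y : Fin n → ℝ | ∀ i, 0 ≤ y i} with hQ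
  have hQm : MeasurableSet Q := by
    have hQi : Q = ⋂ i, {y : Fin n → ℝ | 0 ≤ y i} := by ext y; simp [hQ]
    have : IsClosed Q := by
      rw [hQi]
      exact isClosed_iInter fun i => isClosed_le continuous_const (continuous_apply i)
    exact this.measurableSet
  set Sl : Matrix (Fin n) (Fin n) ℝ := hL.2.2.sqrt with hSl
  have hsqrtconv : Filter.Tendsto (fun m => (hA m).2.2.sqrt) Filter.atTop (nhds Sl) :=
    msqrt_tendsto (fun m => (hA m).2.2) (fun m => (hA m).2.1) hL.2.2 hconv
  -- reduce to sqrt form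
  have hW : ∀ m, Wfun n (A m) = ∫ x : Fin n → ℝ,
      Real.exp (-(x ⬝ᵥ x)) * Q.indicator (fun _ => (1:ℝ)) ((hA m).2.2.sqrt *ᵥ x) := by
    intro m; rw [Wfun, msqrt_eq (hA m).2.2]
  have hWL : Wfun n L = ∫ x : Fin n → ℝ,
      Real.exp (-(x ⬝ᵥ x)) * Q.indicator (fun _ => (1:ℝ)) (Sl *ᵥ x) := by
    rw [Wfun, msqrt_eq hL.2.2]
  simp only [hW, hWL]
  -- dominated convergence
  have hmeas : ∀ (C : Matrix (Fin n) (Fin n) ℝ),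
      AEStronglyMeasurable (fun x : Fin n → ℝ =>
        Real.exp (-(x ⬝ᵥ x)) * Q.indicator (fun _ => (1:ℝ)) (C *ᵥ x)) volume := by
    intro C
    apply Measurable.aestronglyMeasurable
    apply Measurable.mul
    · exact (Real.continuous_exp.comp (continuous_id.dotProduct continuous_id).neg).measurable
    · have hC : Measurable fun x : Fin n → ℝ => C *ᵥ x :=
        (continuous_const.matrix_mulVec continuous_id).measurable
      exact (measurable_const.indicator hQm).comp hC
  have hbound : ∀ (C : Matrix (Fin n) (Fin n) ℝ) (x : Fin n → ℝ),
      ‖Real.exp (-(x ⬝ᵥ x)) * Q.indicator (fun _ => (1:ℝ)) (C *ᵥ x)‖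
        ≤ Real.exp (-(x ⬝ᵥ x)) := by
    intro C x
    rw [Real.norm_eq_abs, abs_mul, abs_of_pos (Real.exp_pos _)]
    have h01 : |Q.indicator (fun _ => (1:ℝ)) (C *ᵥ x)| ≤ 1 := by
      by_cases h : C *ᵥ x ∈ Q <;> simp [Set.indicator_apply, h]
    nlinarith [Real.exp_pos (-(x ⬝ᵥ x))]
  have hint : Integrable (fun x : Fin n → ℝ => Real.exp (-(x ⬝ᵥ x))) := by
    have heq : (fun x : Fin n → ℝ => Real.exp (-(x ⬝ᵥ x)))
        = fun x : Fin n → ℝ => ∏ i, Real.exp (-(1:ℝ) * (x i)^2) := by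
      funext x
      rw [← Real.exp_sum]
      congr 1
      simp [dotProduct, Finset.sum_neg_distrib]
      ring_nf
    rw [heq]
    exact Integrable.fintype_prod fun i => integrable_exp_neg_mul_sq one_pos
  apply tendsto_integral_of_dominated_convergence _ (fun m => hmeas _) hint
    (fun m => Filter.Eventually.of_forall fun x => hbound _ x)
  -- a.e. pointwise convergence
  have hnull : volume {x : Fin n → ℝ | ∃ i, (Sl *ᵥ x) i = 0} = 0 := by
    have : {x : Fin n → ℝ | ∃ i, (Sl *ᵥ x) i = 0}
        = ⋃ i, {x : Fin n → ℝ | (Sl *ᵥ x) i = 0} := by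
      ext x; simp
    rw [this]
    refine measure_iUnion_null fun i => hyperplane_null Sl i ?_
    by_contra hall
    push_neg at hall
    have := row_sq_sum hL.2.2 i
    rw [hL.2.1 i] at this
    simp only [← hSl] at this
    rw [Finset.sum_eq_zero (fun j _ => by rw [hall j]; ring)] at this
    norm_num at this
  have hae : ∀ᵐ x : Fin n → ℝ, ∀ i, (Sl *ᵥ x) i ≠ 0 := by
    rw [MeasureTheory.ae_iff]
    convert hnull using 2
    ext x
    simp
  filter_upwards [hae] with x hxi
  have hvt : ∀ i, Filter.Tendsto (fun m => ((hA m).2.2.sqrt *ᵥ x) i) Filter.atTop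
      (nhds ((Sl *ᵥ x) i)) := by
    intro i
    have hcont : Continuous fun C : Matrix (Fin n) (Fin n) ℝ => (C *ᵥ x) i :=
      (continuous_apply i).comp (continuous_id.matrix_mulVec continuous_const)
    exact (hcont.tendsto Sl).comp hsqrtconv
  have hev : ∀ᶠ m in Filter.atTop,
      Q.indicator (fun _ => (1:ℝ)) ((hA m).2.2.sqrt *ᵥ x)
        = Q.indicator (fun _ => (1:ℝ)) (Sl *ᵥ x) := by
    by_cases hmem : Sl *ᵥ x ∈ Q
    · have hpos : ∀ i, 0 < (Sl *ᵥ x) i := fun i => lt_of_le_of_ne (hmem i) (Ne.symm (hxi i))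
      have hevp : ∀ᶠ m in Filter.atTop, ∀ i, 0 < ((hA m).2.2.sqrt *ᵥ x) i :=
        Filter.eventually_all.2 fun i => (hvt i).eventually (eventually_gt_nhds (hpos i))
      filter_upwards [hevp] with m hm
      have h1 : (hA m).2.2.sqrt *ᵥ x ∈ Q := fun i => (hm i).le
      rw [Set.indicator_of_mem h1, Set.indicator_of_mem hmem]
    · obtain ⟨i, hi⟩ : ∃ i, (Sl *ᵥ x) i < 0 := by
        by_contra hc
        push_neg at hc
        exact hmem fun i => hc i
      have hevn : ∀ᶠ m in Filter.atTop, ((hA m).2.2.sqrt *ᵥ x) i < 0 :=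
        (hvt i).eventually (eventually_lt_nhds hi)
      filter_upwards [hevn] with m hm
      have h1 : (hA m).2.2.sqrt *ᵥ x ∉ Q := fun hmem' => absurd (hmem' i) (not_le.2 hm)
      rw [Set.indicator_of_notMem h1, Set.indicator_of_notMem hmem]
  have heq : (fun m => Real.exp (-(x ⬝ᵥ x)) *
        Q.indicator (fun _ => (1:ℝ)) ((hA m).2.2.sqrt *ᵥ x))
      =ᶠ[Filter.atTop] (fun _ =>
        Real.exp (-(x ⬝ᵥ x)) * Q.indicator (fun _ => (1:ℝ)) (Sl *ᵥ x)) :=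
    hev.mono fun m hm => by dsimp only; rw [hm]
  exact Filter.Tendsto.congr' heq.symm tendsto_const_nhds
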